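/- (Sufficient condition for invertibility of E[H_S(x)]) If E_{S∼D_x}[S Sᵀ] is invertible and DF(x)ᵀ DF(x) is invertible, then E_{S∼D_x}[H_S(x)] with H_S(x) = S(Sᵀ DF(x)ᵀ DF(x) S)† Sᵀ is invertible. -/

import Mathlib

open Matrix MeasureTheory

/-- Uniqueness of the Moore–Penrose pseudoinverse. -/
private lemma pinv_unique {τ : ℕ} (A B C : Matrix (Fin τ) (Fin τ) ℝ)
    (hB1 : A * B * A = A) (hB2 : B * A * B = B)
    (hB3 : (A * B)ᵀ = A * B) (hB4 : (B * A)ᵀ = B * A)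
    (hC1 : A * C * A = A) (hC2 : C * A * C = C)
    (hC3 : (A * C)ᵀ = A * C) (hC4 : (C * A)ᵀ = C * A) :
    B = C := by
  have hAB : A * B = A * C := by
    calc A * B = (A * C * A) * B := by rw [hC1]
    _ = (A * C) * (A * B) := by simp only [Matrix.mul_assoc]
    _ = (A * C)ᵀ * (A * B)ᵀ := by rw [hC3, hB3]
    _ = Cᵀ * (A * B * A)ᵀ := by
        simp only [Matrix.transpose_mul, Matrix.mul_assoc]
    _ = Cᵀ * Aᵀ := by rw [hB1]
    _ = (A * C)ᵀ := by rw [Matrix.transpose_mul]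
    _ = A * C := hC3
  have hBA : B * A = C * A := by
    calc B * A = B * (A * C * A) := by rw [hC1]
    _ = (B * A) * (C * A) := by simp only [Matrix.mul_assoc]
    _ = (B * A)ᵀ * (C * A)ᵀ := by rw [hB4, hC4]
    _ = (A * B * A)ᵀ * Cᵀ := by
        simp only [Matrix.transpose_mul, Matrix.mul_assoc]
    _ = Aᵀ * Cᵀ := by rw [hB1]
    _ = (C * A)ᵀ := by rw [Matrix.transpose_mul]
    _ = C * A := hC4
  calc B = B * A * B := hB2.symm
  _ = C * A * B := by rw [hBA]
  _ = C * (A * B) := by rw [Matrix.mul_assoc]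
  _ = C * (A * C) := by rw [hAB]
  _ = C * A * C := (Matrix.mul_assoc _ _ _).symm
  _ = C := hC2

/-- If `P (B Bᵀ) = B Bᵀ` then `P B = B` (over `ℝ`). -/
private lemma proj_fix {a b : ℕ} (B : Matrix (Fin a) (Fin b) ℝ)
    (P : Matrix (Fin a) (Fin a) ℝ) (h : P * (B * Bᵀ) = B * Bᵀ) :
    B = P * B := by
  have hX : (B - P * B) * (B - P * B)ᵀ = 0 := by
    rw [Matrix.transpose_sub, Matrix.transpose_mul, Matrix.mul_sub,
      Matrix.sub_mul, Matrix.sub_mul]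
    have t2 : P * B * Bᵀ = B * Bᵀ := by rw [Matrix.mul_assoc]; exact h
    have t1 : B * (Bᵀ * Pᵀ) = (B * Bᵀ) * Pᵀ := by rw [Matrix.mul_assoc]
    have t3 : P * B * (Bᵀ * Pᵀ) = (B * Bᵀ) * Pᵀ := by rw [← Matrix.mul_assoc, t2]
    rw [t1, t2, t3]
    abel
  have hX0 : B - P * B = 0 := by
    rw [show (B - P * B)ᵀ = (B - P * B)ᴴ from
      (Matrix.conjTranspose_eq_transpose_of_trivial _).symm] at hX
    exact Matrix.self_mul_conjTranspose_eq_zero.mp hX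
  exact (sub_eq_zero.mp hX0)

/-- Key pointwise facts: the quadratic form of `S N Sᵀ` is nonnegative, and if it
vanishes at `v` then `Sᵀ v = 0`. -/
private lemma key_pointwise {p m τ : ℕ} {J : Matrix (Fin p) (Fin m) ℝ}
    {L : Matrix (Fin m) (Fin m) ℝ} (hLsym : Lᵀ = L) (hLL : L * L = Jᵀ * J)
    (hLu : IsUnit L)
    (S : Matrix (Fin m) (Fin τ) ℝ) (N : Matrix (Fin τ) (Fin τ) ℝ)
    (h1 : (Sᵀ * Jᵀ * J * S) * N * (Sᵀ * Jᵀ * J * S) = Sᵀ * Jᵀ * J * S)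
    (h2 : N * (Sᵀ * Jᵀ * J * S) * N = N)
    (h3 : ((Sᵀ * Jᵀ * J * S) * N)ᵀ = (Sᵀ * Jᵀ * J * S) * N)
    (h4 : (N * (Sᵀ * Jᵀ * J * S))ᵀ = N * (Sᵀ * Jᵀ * J * S))
    (v : Fin m → ℝ) :
    0 ≤ v ⬝ᵥ ((S * N * Sᵀ) *ᵥ v) ∧
      (v ⬝ᵥ ((S * N * Sᵀ) *ᵥ v) = 0 → Sᵀ *ᵥ v = 0) := by
  have hMsym : (Sᵀ * Jᵀ * J * S)ᵀ = Sᵀ * Jᵀ * J * S := by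
    simp only [Matrix.transpose_mul, Matrix.transpose_transpose, Matrix.mul_assoc]
  -- N is symmetric, by uniqueness of the pseudoinverse
  have hNsym : Nᵀ = N := by
    have e1 : (Sᵀ * Jᵀ * J * S) * Nᵀ = N * (Sᵀ * Jᵀ * J * S) := by
      calc (Sᵀ * Jᵀ * J * S) * Nᵀ = (N * (Sᵀ * Jᵀ * J * S))ᵀ := by
            rw [Matrix.transpose_mul, hMsym]
      _ = N * (Sᵀ * Jᵀ * J * S) := h4
    have e2 : Nᵀ * (Sᵀ * Jᵀ * J * S) = (Sᵀ * Jᵀ * J * S) * N := by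
      calc Nᵀ * (Sᵀ * Jᵀ * J * S) = ((Sᵀ * Jᵀ * J * S) * N)ᵀ := by
            rw [Matrix.transpose_mul, hMsym]
      _ = (Sᵀ * Jᵀ * J * S) * N := h3
    have hC1 : (Sᵀ * Jᵀ * J * S) * Nᵀ * (Sᵀ * Jᵀ * J * S) = Sᵀ * Jᵀ * J * S := by
      have h := congrArg Matrix.transpose h1
      simpa only [Matrix.transpose_mul, Matrix.transpose_transpose, hMsym, Matrix.mul_assoc] using h
    have hC2 : Nᵀ * (Sᵀ * Jᵀ * J * S) * Nᵀ = Nᵀ := by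
      have h := congrArg Matrix.transpose h2
      simpa only [Matrix.transpose_mul, Matrix.transpose_transpose, hMsym, Matrix.mul_assoc] using h
    have hC3 : ((Sᵀ * Jᵀ * J * S) * Nᵀ)ᵀ = (Sᵀ * Jᵀ * J * S) * Nᵀ := by
      rw [e1]; exact h4
    have hC4 : (Nᵀ * (Sᵀ * Jᵀ * J * S))ᵀ = Nᵀ * (Sᵀ * Jᵀ * J * S) := by
      rw [e2]; exact h3
    exact (pinv_unique (Sᵀ * Jᵀ * J * S) N Nᵀ h1 h2 h3 h4 hC1 hC2 hC3 hC4).symm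
  -- H = Cᵀ C with C = J S N Sᵀ
  have hH : (J * S * N * Sᵀ)ᵀ * (J * S * N * Sᵀ) = S * N * Sᵀ := by
    calc (J * S * N * Sᵀ)ᵀ * (J * S * N * Sᵀ)
        = S * (Nᵀ * (Sᵀ * Jᵀ * J * S) * N) * Sᵀ := by
          simp only [Matrix.transpose_mul, Matrix.transpose_transpose,
            Matrix.mul_assoc]
    _ = S * (N * (Sᵀ * Jᵀ * J * S) * N) * Sᵀ := by rw [hNsym]
    _ = S * N * Sᵀ := by rw [h2, Matrix.mul_assoc]
  have hq : v ⬝ᵥ ((S * N * Sᵀ) *ᵥ v)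
      = ((J * S * N * Sᵀ) *ᵥ v) ⬝ᵥ ((J * S * N * Sᵀ) *ᵥ v) := by
    rw [← hH, ← Matrix.mulVec_mulVec, Matrix.dotProduct_mulVec,
      Matrix.vecMul_transpose]
  constructor
  · rw [hq]
    exact Finset.sum_nonneg fun i _ => mul_self_nonneg _
  · intro hv
    rw [hq] at hv
    have hCv : (J * S * N * Sᵀ) *ᵥ v = 0 := dotProduct_self_eq_zero.mp hv
    have z2 : (Sᵀ * Jᵀ * J * S * N * Sᵀ) *ᵥ v = 0 := by
      have e1 : Sᵀ * Jᵀ * J * S * N * Sᵀ = (Sᵀ * Jᵀ) * (J * S * N * Sᵀ) := by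
        simp only [Matrix.mul_assoc]
      rw [e1, ← Matrix.mulVec_mulVec, hCv, Matrix.mulVec_zero]
    -- X Xᵀ = 0 where X = Sᵀ L - (M N) (Sᵀ L)
    have hBB : (Sᵀ * L) * (Sᵀ * L)ᵀ = Sᵀ * Jᵀ * J * S := by
      rw [Matrix.transpose_mul, Matrix.transpose_transpose, hLsym]
      calc Sᵀ * L * (L * S) = Sᵀ * (L * L) * S := by simp only [Matrix.mul_assoc]
      _ = Sᵀ * Jᵀ * J * S := by rw [hLL]; simp only [Matrix.mul_assoc]
    have hBP : Sᵀ * L = (Sᵀ * Jᵀ * J * S * N) * (Sᵀ * L) :=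
      proj_fix (Sᵀ * L) (Sᵀ * Jᵀ * J * S * N) (by rw [hBB]; exact h1)
    -- invert L
    have hLdet : IsUnit L.det := (Matrix.isUnit_iff_isUnit_det L).mp hLu
    have hLinv : L * L⁻¹ = 1 := Matrix.mul_nonsing_inv L hLdet
    calc Sᵀ *ᵥ v = Sᵀ *ᵥ ((L * L⁻¹) *ᵥ v) := by rw [hLinv, Matrix.one_mulVec]
    _ = (Sᵀ * L) *ᵥ (L⁻¹ *ᵥ v) := by simp only [← Matrix.mulVec_mulVec]
    _ = ((Sᵀ * Jᵀ * J * S * N) * (Sᵀ * L)) *ᵥ (L⁻¹ *ᵥ v) := by rw [← hBP]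
    _ = (Sᵀ * Jᵀ * J * S * N) *ᵥ (Sᵀ *ᵥ (L *ᵥ (L⁻¹ *ᵥ v))) := by
        simp only [← Matrix.mulVec_mulVec]
    _ = (Sᵀ * Jᵀ * J * S * N) *ᵥ (Sᵀ *ᵥ v) := by
        rw [show L *ᵥ (L⁻¹ *ᵥ v) = v from by
          rw [Matrix.mulVec_mulVec, hLinv, Matrix.one_mulVec]]
    _ = (Sᵀ * Jᵀ * J * S * N * Sᵀ) *ᵥ v := by simp only [Matrix.mulVec_mulVec]
    _ = 0 := z2

/-- sufficient condition for invertibility of `E[H_S(x)]`.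
`J = DF(x)` fixed; `H ω = S(ω) Mdag(ω) S(ω)ᵀ` with `Mdag(ω)` the Moore–Penrose
pseudoinverse of `S(ω)ᵀ Jᵀ J S(ω)`.  If `E[S Sᵀ]` and `Jᵀ J` are invertible, then
`E[H]` is invertible. -/
theorem expectation_H_invertible {p m τ : ℕ} {Ω : Type*} [MeasurableSpace Ω]
    (μ : Measure Ω) [IsProbabilityMeasure μ]
    (J : Matrix (Fin p) (Fin m) ℝ)
    (S : Ω → Matrix (Fin m) (Fin τ) ℝ)
    (Mdag : Ω → Matrix (Fin τ) (Fin τ) ℝ)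
    (hpen1 : ∀ ω, ((S ω)ᵀ * Jᵀ * J * S ω) * Mdag ω * ((S ω)ᵀ * Jᵀ * J * S ω)
        = (S ω)ᵀ * Jᵀ * J * S ω)
    (hpen2 : ∀ ω, Mdag ω * ((S ω)ᵀ * Jᵀ * J * S ω) * Mdag ω = Mdag ω)
    (hpen3 : ∀ ω, (((S ω)ᵀ * Jᵀ * J * S ω) * Mdag ω)ᵀ = ((S ω)ᵀ * Jᵀ * J * S ω) * Mdag ω)
    (hpen4 : ∀ ω, (Mdag ω * ((S ω)ᵀ * Jᵀ * J * S ω))ᵀ = Mdag ω * ((S ω)ᵀ * Jᵀ * J * S ω))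
    (hSint : ∀ i j, Integrable (fun ω => (S ω * (S ω)ᵀ) i j) μ)
    (hHint : ∀ i j, Integrable (fun ω => (S ω * Mdag ω * (S ω)ᵀ) i j) μ)
    (hSS : IsUnit (Matrix.of fun i j => ∫ ω, (S ω * (S ω)ᵀ) i j ∂μ))
    (hJJ : IsUnit (Jᵀ * J)) :
    IsUnit (Matrix.of fun i j => ∫ ω, (S ω * Mdag ω * (S ω)ᵀ) i j ∂μ) := by
  -- square root of Jᵀ J
  have hKpsd : (Jᵀ * J).PosSemidef := by
    have := Matrix.posSemidef_conjTranspose_mul_self J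
    rwa [Matrix.conjTranspose_eq_transpose_of_trivial] at this
  set L : Matrix (Fin m) (Fin m) ℝ := open scoped MatrixOrder in CFC.sqrt (Jᵀ * J) with hLdef
  have hLsym : Lᵀ = L := by
    have h := open scoped MatrixOrder in (CFC.sqrt_nonneg (Jᵀ * J)).posSemidef.isHermitian
    rwa [Matrix.IsHermitian, Matrix.conjTranspose_eq_transpose_of_trivial] at h
  have hLL : L * L = Jᵀ * J := open scoped MatrixOrder in CFC.sqrt_mul_sqrt_self _ hKpsd.nonneg
  have hLu : IsUnit L := by
    rw [Matrix.isUnit_iff_isUnit_det]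
    have hKdet : IsUnit (Jᵀ * J).det := (Matrix.isUnit_iff_isUnit_det _).mp hJJ
    have : L.det * L.det = (Jᵀ * J).det := by rw [← Matrix.det_mul, hLL]
    rw [← this] at hKdet
    exact isUnit_of_mul_isUnit_left hKdet
  -- reduce to triviality of the kernel
  rw [Matrix.isUnit_iff_isUnit_det, isUnit_iff_ne_zero]
  intro hdet
  obtain ⟨v, hv0, hEHv⟩ := Matrix.exists_mulVec_eq_zero_iff.mpr hdet
  apply hv0
  -- quadratic form of the expectation as an integral
  have hq : v ⬝ᵥ ((Matrix.of fun i j => ∫ ω, (S ω * Mdag ω * (S ω)ᵀ) i j ∂μ) *ᵥ v)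
      = ∫ ω, v ⬝ᵥ ((S ω * Mdag ω * (S ω)ᵀ) *ᵥ v) ∂μ := by
    simp only [dotProduct, Matrix.mulVec, Matrix.of_apply]
    rw [integral_finset_sum _ fun i _ => ?_]
    · refine Finset.sum_congr rfl fun i _ => ?_
      rw [integral_const_mul]
      congr 1
      rw [integral_finset_sum _ fun j _ => (hHint i j).mul_const (v j)]
      exact Finset.sum_congr rfl fun j _ => (integral_mul_const _ _).symm
    · exact Integrable.const_mul
        (integrable_finset_sum _ fun j _ => (hHint i j).mul_const (v j)) _
  have hkey := fun ω => key_pointwise hLsym hLL hLu (S ω) (Mdag ω)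
    (hpen1 ω) (hpen2 ω) (hpen3 ω) (hpen4 ω) v
  have hfint : Integrable (fun ω => v ⬝ᵥ ((S ω * Mdag ω * (S ω)ᵀ) *ᵥ v)) μ := by
    have : (fun ω => v ⬝ᵥ ((S ω * Mdag ω * (S ω)ᵀ) *ᵥ v))
        = fun ω => ∑ i, v i * ∑ j, (S ω * Mdag ω * (S ω)ᵀ) i j * v j := by
      funext ω; simp [dotProduct, Matrix.mulVec]
    rw [this]
    exact integrable_finset_sum _ fun i _ => Integrable.const_mul
      (integrable_finset_sum _ fun j _ => (hHint i j).mul_const (v j)) _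
  have hint0 : ∫ ω, v ⬝ᵥ ((S ω * Mdag ω * (S ω)ᵀ) *ᵥ v) ∂μ = 0 := by
    rw [← hq, hEHv, dotProduct_zero]
  have hae : (fun ω => v ⬝ᵥ ((S ω * Mdag ω * (S ω)ᵀ) *ᵥ v)) =ᵐ[μ] 0 :=
    (integral_eq_zero_iff_of_nonneg (fun ω => (hkey ω).1) hfint).mp hint0
  have hae2 : ∀ᵐ ω ∂μ, (S ω)ᵀ *ᵥ v = 0 := by
    filter_upwards [hae] with ω hω
    exact (hkey ω).2 hω
  have hae3 : ∀ᵐ ω ∂μ, ∀ i, ((S ω * (S ω)ᵀ) *ᵥ v) i = 0 := by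
    filter_upwards [hae2] with ω hω i
    rw [← Matrix.mulVec_mulVec, hω, Matrix.mulVec_zero]
    rfl
  -- hence E[S Sᵀ] v = 0
  have hESSv : (Matrix.of fun i j => ∫ ω, (S ω * (S ω)ᵀ) i j ∂μ) *ᵥ v = 0 := by
    funext i
    have hswap : ((Matrix.of fun i j => ∫ ω, (S ω * (S ω)ᵀ) i j ∂μ) *ᵥ v) i
        = ∫ ω, ((S ω * (S ω)ᵀ) *ᵥ v) i ∂μ := by
      simp only [Matrix.mulVec, dotProduct, Matrix.of_apply]
      rw [integral_finset_sum _ fun j _ => (hSint i j).mul_const (v j)]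
      exact Finset.sum_congr rfl fun j _ => (integral_mul_const _ _).symm
    rw [hswap]
    have : (fun ω => ((S ω * (S ω)ᵀ) *ᵥ v) i) =ᵐ[μ] 0 := by
      filter_upwards [hae3] with ω hω
      exact hω i
    simp [integral_congr_ae this]
  -- invertibility of E[S Sᵀ] forces v = 0
  obtain ⟨u, hu⟩ := hSS
  calc v = ((↑u⁻¹ * ↑u : Matrix (Fin m) (Fin m) ℝ)) *ᵥ v := by
        rw [u.inv_mul, Matrix.one_mulVec]
  _ = (↑u⁻¹ : Matrix (Fin m) (Fin m) ℝ) *ᵥ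
        ((Matrix.of fun i j => ∫ ω, (S ω * (S ω)ᵀ) i j ∂μ) *ᵥ v) := by
        rw [Matrix.mulVec_mulVec, hu]
  _ = 0 := by rw [hESSv, Matrix.mulVec_zero]
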